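/- arXiv:1804.08392 — 2 statements merged into one kernel-verified Lean document; each statement's English description precedes it below -/
import Mathlib

section
/- Let L > 0, let D₁₁, D₂₂ : ℝ → ℝ be C¹, L-periodic, with positive lower bounds, and let w₁, w₂ : ℝ → ℝ be C², L-periodic cell functions satisfying (D₂₂ w₁′)′ = 0 and (D₂₂(1 + w₂′))′ = 0 on ℝ. Let g : ℝ → ℝ be C¹, let U₀ : ℝ² × ℝ → ℝ be C³ (a function of (X₁,X₂,T), independent of the fast variable), let U₁(X,Y₂,T) := w₁(Y₂)·(∂U₀/∂X₁ + g(U₀)) + w₂(Y₂)·∂U₀/∂X₂, let U₂ : ℝ² × ℝ × ℝ → ℝ be C² and L-periodic in the fast variable Y₂, and let F : ℝ² × ℝ × ℝ → ℝ be continuous and L-periodic in Y₂. Assume that for all (X, Y₂, T) the order-ε⁰ equation holds: ∂U₀/∂T − [D₁₁(Y₂) ∂²U₀/∂X₁² + D₂₂(Y₂) ∂²U₀/∂X₂² + ∂/∂X₂(D₂₂(Y₂) ∂U₁/∂Y₂) + ∂/∂Y₂(D₂₂(Y₂) ∂U₁/∂X₂) + ∂/∂Y₂(D₂₂(Y₂)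 ∂U₂/∂Y₂) + ∂/∂X₁(D₁₁(Y₂) g(U₀))] = F(X,Y₂,T). Define the effective coefficients 𝔻₁₁ := (1/L)∫₀^L D₁₁(Y₂) dY₂, 𝔻₂₁ := (1/L)∫₀^L D₂₂(Y₂) w₁′(Y₂) dY₂, 𝔻₂₂ := (1/L)∫₀^L D₂₂(Y₂)(1 + w₂′(Y₂)) dY₂. Then for all (X,T) the upscaled equation holds: ∂U₀/∂T − ∂/∂X₁[𝔻₁₁(∂U₀/∂X₁ + g(U₀))] − ∂/∂X₂[𝔻₂₁(∂U₀/∂X₁ + g(U₀)) + 𝔻₂₂ ∂U₀/∂X₂] = (1/L)∫₀^L F(X,Y₂,T) dY₂. -/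
open intervalIntegral

private lemma periodic_deriv'' {f : ℝ → ℝ} {L : ℝ} (hf : Function.Periodic f L) :
    Function.Periodic (deriv f) L := by
  intro x
  have h : (fun y => f (y + L)) = f := funext fun y => hf y
  rw [← deriv_comp_add_const, h]

private lemma deriv_contDiff' {f : ℝ → ℝ} {n : ℕ} (hf : ContDiff ℝ ((n : WithTop ℕ∞) + 1) f) :
    ContDiff ℝ (n : WithTop ℕ∞) (deriv f) :=
  (contDiff_succ_iff_deriv.mp hf).2.2

private lemma integral_deriv_periodic' {f : ℝ → ℝ} {L : ℝ}
    (hf : ContDiff ℝ 1 f) (hper : Function.Periodic f L) :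
    ∫ y in (0:ℝ)..L, deriv f y = 0 := by
  rw [intervalIntegral.integral_deriv_eq_sub
      (fun x _ => (hf.differentiable one_ne_zero).differentiableAt)
      ((contDiff_one_iff_deriv.mp hf).2.intervalIntegrable _ _)]
  have : f L = f 0 := by simpa using hper 0
  simp [this]

private lemma slice2_contDiff {n : WithTop ℕ∞} {f : ℝ × ℝ × ℝ → ℝ} (hf : ContDiff ℝ n f)
    (a c : ℝ) : ContDiff ℝ n fun s => f (a, s, c) :=
  hf.comp (contDiff_const.prodMk (contDiff_id.prodMk contDiff_const))

private lemma hasDerivAt_slice1 {f : ℝ × ℝ × ℝ → ℝ} (hf : Differentiable ℝ f) (a b c : ℝ) :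
    HasDerivAt (fun s => f (s, b, c)) (fderiv ℝ f (a, b, c) (1, 0, 0)) a :=
  (hf (a, b, c)).hasFDerivAt.comp_hasDerivAt a ((hasDerivAt_id a).prodMk (hasDerivAt_const a (b, c)))



/-- Averaging the order-`ε⁰` equation of the two-scale expansion over one
period of the fast variable `Y₂` yields the upscaled finite-thickness membrane equation
`∂U₀/∂T − ∂/∂X₁[𝔻₁₁(∂U₀/∂X₁ + g(U₀))] − ∂/∂X₂[𝔻₂₁(∂U₀/∂X₁ + g(U₀)) + 𝔻₂₂ ∂U₀/∂X₂]
  = (1/L)∫₀^L F dY₂`,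
with effective coefficients `𝔻₁₁ = (1/L)∫₀^L D₁₁`, `𝔻₂₁ = (1/L)∫₀^L D₂₂ w₁′`,
`𝔻₂₂ = (1/L)∫₀^L D₂₂(1 + w₂′)`. -/
theorem upscaled_finite_thickness_membrane_equation
    (L : ℝ) (hL : 0 < L)
    (c₁ c₂ : ℝ) (hc₁ : 0 < c₁) (hc₂ : 0 < c₂)
    (D₁₁ D₂₂ : ℝ → ℝ)
    (hD₁₁ : ContDiff ℝ 1 D₁₁) (hD₂₂ : ContDiff ℝ 1 D₂₂)
    (hD₁₁_per : Function.Periodic D₁₁ L) (hD₂₂_per : Function.Periodic D₂₂ L)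
    (hD₁₁_pos : ∀ y : ℝ, c₁ ≤ D₁₁ y) (hD₂₂_pos : ∀ y : ℝ, c₂ ≤ D₂₂ y)
    (w₁ w₂ : ℝ → ℝ) (hw₁ : ContDiff ℝ 2 w₁) (hw₂ : ContDiff ℝ 2 w₂)
    (hw₁_per : Function.Periodic w₁ L) (hw₂_per : Function.Periodic w₂ L)
    (hcell₁ : ∀ y : ℝ, deriv (fun z => D₂₂ z * deriv w₁ z) y = 0)
    (hcell₂ : ∀ y : ℝ, deriv (fun z => D₂₂ z * (1 + deriv w₂ z)) y = 0)
    (g : ℝ → ℝ) (hg : ContDiff ℝ 1 g)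
    (U₀ : ℝ → ℝ → ℝ → ℝ)
    (hU₀ : ContDiff ℝ 3 fun p : ℝ × ℝ × ℝ => U₀ p.1 p.2.1 p.2.2)
    (U₁ : ℝ → ℝ → ℝ → ℝ → ℝ)
    (hU₁ : ∀ X₁ X₂ Y₂ T : ℝ,
      U₁ X₁ X₂ Y₂ T
        = w₁ Y₂ * (deriv (fun s => U₀ s X₂ T) X₁ + g (U₀ X₁ X₂ T))
          + w₂ Y₂ * deriv (fun s => U₀ X₁ s T) X₂)
    (U₂ : ℝ → ℝ → ℝ → ℝ → ℝ)
    (hU₂ : ContDiff ℝ 2 fun p : ℝ × ℝ × ℝ × ℝ => U₂ p.1 p.2.1 p.2.2.1 p.2.2.2)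
    (hU₂_per : ∀ X₁ X₂ T : ℝ, Function.Periodic (fun y => U₂ X₁ X₂ y T) L)
    (F : ℝ → ℝ → ℝ → ℝ → ℝ)
    (hF : Continuous fun p : ℝ × ℝ × ℝ × ℝ => F p.1 p.2.1 p.2.2.1 p.2.2.2)
    (hF_per : ∀ X₁ X₂ T : ℝ, Function.Periodic (fun y => F X₁ X₂ y T) L)
    -- the order-ε⁰ equation of the two-scale expansion
    (heps0 : ∀ X₁ X₂ Y₂ T : ℝ,
      deriv (fun s => U₀ X₁ X₂ s) T
        - (D₁₁ Y₂ * iteratedDeriv 2 (fun s => U₀ s X₂ T) X₁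
            + D₂₂ Y₂ * iteratedDeriv 2 (fun s => U₀ X₁ s T) X₂
            + deriv (fun s => D₂₂ Y₂ * deriv (fun y => U₁ X₁ s y T) Y₂) X₂
            + deriv (fun y => D₂₂ y * deriv (fun s => U₁ X₁ s y T) X₂) Y₂
            + deriv (fun y => D₂₂ y * deriv (fun z => U₂ X₁ X₂ z T) y) Y₂
            + deriv (fun s => D₁₁ Y₂ * g (U₀ s X₂ T)) X₁)
      = F X₁ X₂ Y₂ T)
    -- the effective transport coefficients
    (𝔻₁₁ 𝔻₂₁ 𝔻₂₂ : ℝ)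
    (h𝔻₁₁ : 𝔻₁₁ = (1 / L) * ∫ y in (0:ℝ)..L, D₁₁ y)
    (h𝔻₂₁ : 𝔻₂₁ = (1 / L) * ∫ y in (0:ℝ)..L, D₂₂ y * deriv w₁ y)
    (h𝔻₂₂ : 𝔻₂₂ = (1 / L) * ∫ y in (0:ℝ)..L, D₂₂ y * (1 + deriv w₂ y)) :
    ∀ X₁ X₂ T : ℝ,
      deriv (fun s => U₀ X₁ X₂ s) T
        - deriv (fun s => 𝔻₁₁ * (deriv (fun r => U₀ r X₂ T) s + g (U₀ s X₂ T))) X₁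
        - deriv (fun s =>
            𝔻₂₁ * (deriv (fun r => U₀ r s T) X₁ + g (U₀ X₁ s T))
              + 𝔻₂₂ * deriv (fun r => U₀ X₁ r T) s) X₂
      = (1 / L) * ∫ y in (0:ℝ)..L, F X₁ X₂ y T := by
  intro X₁ X₂ T
  have hLne : L ≠ 0 := ne_of_gt hL
  set U : ℝ × ℝ × ℝ → ℝ := fun p => U₀ p.1 p.2.1 p.2.2 with hUdef
  have hU3 : ContDiff ℝ 3 U := hU₀
  have hUdiff : Differentiable ℝ U := hU3.differentiable (by norm_num)
  -- the first partial derivative of U₀ as a function of all three variables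
  set P₁ : ℝ × ℝ × ℝ → ℝ := fun p => fderiv ℝ U p (1, 0, 0) with hP₁def
  have hP₁ : ContDiff ℝ 2 P₁ :=
    (hU3.fderiv_right (m := 2) (by norm_num)).clm_apply contDiff_const
  have hP₁slice : ∀ a b c : ℝ, deriv (fun r => U₀ r b c) a = P₁ (a, b, c) := fun a b c =>
    (hasDerivAt_slice1 hUdiff a b c).deriv
  -- slices of U₀
  set f₁ : ℝ → ℝ := fun r => U₀ r X₂ T with hf₁def
  set f₂ : ℝ → ℝ := fun r => U₀ X₁ r T with hf₂def
  have hf₁ : ContDiff ℝ 3 f₁ :=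
    hU3.comp ((contDiff_id (E := ℝ)).prodMk (contDiff_const (c := (X₂, T))))
  have hf₂ : ContDiff ℝ 3 f₂ := slice2_contDiff hU3 X₁ T
  have hdf₁ : ContDiff ℝ 2 (deriv f₁) := deriv_contDiff' (n := 2) (by exact_mod_cast hf₁)
  have hdf₂ : ContDiff ℝ 2 (deriv f₂) := deriv_contDiff' (n := 2) (by exact_mod_cast hf₂)
  -- key pointwise quantities (constants in y)
  set Ut : ℝ := deriv (fun s => U₀ X₁ X₂ s) T with hUtdef
  set A₁₁ : ℝ := deriv (deriv f₁) X₁ with hA₁₁def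
  set A₂₂ : ℝ := deriv (deriv f₂) X₂ with hA₂₂def
  set Gg : ℝ → ℝ := fun s => g (U₀ s X₂ T) with hGgdef
  have hGg : ContDiff ℝ 1 Gg := hg.comp (hf₁.of_le (by norm_num))
  set G' : ℝ := deriv Gg X₁ with hG'def
  set q : ℝ → ℝ := fun s => P₁ (X₁, s, T) + g (U₀ X₁ s T) with hqdef
  have hq : ContDiff ℝ 1 q :=
    ((slice2_contDiff hP₁ X₁ T).of_le (by norm_num)).add (hg.comp (hf₂.of_le (by norm_num)))
  set B : ℝ := deriv q X₂ with hBdef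
  have hqat : HasDerivAt q B X₂ := (hq.differentiable one_ne_zero X₂).hasDerivAt
  have hdf₂at : HasDerivAt (deriv f₂) A₂₂ X₂ :=
    (hdf₂.differentiable (by norm_num) X₂).hasDerivAt
  have hdf₁at : HasDerivAt (deriv f₁) A₁₁ X₁ :=
    (hdf₁.differentiable (by norm_num) X₁).hasDerivAt
  have hGgat : HasDerivAt Gg G' X₁ := (hGg.differentiable one_ne_zero X₁).hasDerivAt
  -- rewrite U₁ slices
  have hU₁' : ∀ s z : ℝ, U₁ X₁ s z T = w₁ z * q s + w₂ z * deriv f₂ s := by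
    intro s z
    rw [hU₁, hP₁slice]
  -- the two exact-derivative terms
  set h₁ : ℝ → ℝ := fun y => D₂₂ y * (w₁ y * B + w₂ y * A₂₂) with hh₁def
  set v : ℝ → ℝ := fun z => U₂ X₁ X₂ z T with hvdef
  have hv : ContDiff ℝ 2 v :=
    hU₂.comp (contDiff_const.prodMk (contDiff_const.prodMk (contDiff_id.prodMk contDiff_const)))
  set h₂ : ℝ → ℝ := fun y => D₂₂ y * deriv v y with hh₂def
  have hh₁ : ContDiff ℝ 1 h₁ :=
    hD₂₂.mul (((hw₁.of_le (by norm_num)).mul contDiff_const).add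
      ((hw₂.of_le (by norm_num)).mul contDiff_const))
  have hdv : ContDiff ℝ 1 (deriv v) := deriv_contDiff' (n := 1) (by exact_mod_cast hv)
  have hh₂ : ContDiff ℝ 1 h₂ := hD₂₂.mul hdv
  have hh₁per : Function.Periodic h₁ L := by
    intro x
    simp only [hh₁def, hD₂₂_per x, hw₁_per x, hw₂_per x]
  have hh₂per : Function.Periodic h₂ L := by
    intro x
    simp only [hh₂def, hD₂₂_per x, periodic_deriv'' (f := v) (hU₂_per X₁ X₂ T) x]
  -- pointwise identity for F
  have key : ∀ y : ℝ, F X₁ X₂ y T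
      = (Ut - ((A₁₁ + G') * D₁₁ y + A₂₂ * (D₂₂ y * (1 + deriv w₂ y))
          + B * (D₂₂ y * deriv w₁ y))) - deriv h₁ y - deriv h₂ y := by
    intro y
    have e1 : iteratedDeriv 2 f₁ X₁ = A₁₁ := by
      simp [iteratedDeriv_succ, iteratedDeriv_one, hA₁₁def]
    have e2 : iteratedDeriv 2 f₂ X₂ = A₂₂ := by
      simp [iteratedDeriv_succ, iteratedDeriv_one, hA₂₂def]
    have e6 : deriv (fun s => D₁₁ y * g (U₀ s X₂ T)) X₁ = D₁₁ y * G' :=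
      (hGgat.const_mul (D₁₁ y)).deriv
    have e3 : deriv (fun s => D₂₂ y * deriv (fun z => U₁ X₁ s z T) y) X₂
        = D₂₂ y * (deriv w₁ y * B + deriv w₂ y * A₂₂) := by
      have inner : ∀ s : ℝ, deriv (fun z => U₁ X₁ s z T) y
          = deriv w₁ y * q s + deriv w₂ y * deriv f₂ s := by
        intro s
        have : (fun z => U₁ X₁ s z T) = fun z => w₁ z * q s + w₂ z * deriv f₂ s :=
          funext fun z => hU₁' s z
        rw [this]
        exact ((((hw₁.differentiable (by norm_num)) y).hasDerivAt.mul_const (q s)).add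
          (((hw₂.differentiable (by norm_num)) y).hasDerivAt.mul_const (deriv f₂ s))).deriv
      have : (fun s => D₂₂ y * deriv (fun z => U₁ X₁ s z T) y)
          = fun s => D₂₂ y * (deriv w₁ y * q s + deriv w₂ y * deriv f₂ s) := by
        funext s; rw [inner s]
      rw [this]
      exact (((hqat.const_mul (deriv w₁ y)).add (hdf₂at.const_mul (deriv w₂ y))).const_mul
        (D₂₂ y)).deriv
    have e4 : deriv (fun z => D₂₂ z * deriv (fun s => U₁ X₁ s z T) X₂) y = deriv h₁ y := by
      have : (fun z => D₂₂ z * deriv (fun s => U₁ X₁ s z T) X₂) = h₁ := by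
        funext z
        have : (fun s => U₁ X₁ s z T) = fun s => w₁ z * q s + w₂ z * deriv f₂ s :=
          funext fun s => hU₁' s z
        rw [hh₁def, this]
        congr 1
        exact ((hqat.const_mul (w₁ z)).add (hdf₂at.const_mul (w₂ z))).deriv
      rw [this]
    have h0 := heps0 X₁ X₂ y T
    rw [show (fun s => U₀ s X₂ T) = f₁ from rfl, show (fun s => U₀ X₁ s T) = f₂ from rfl,
      e1, e2, e3, e4, e6] at h0
    rw [← h0]
    ring
  -- integrals
  have hIh₁ : ∫ y in (0:ℝ)..L, deriv h₁ y = 0 := integral_deriv_periodic' hh₁ hh₁per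
  have hIh₂ : ∫ y in (0:ℝ)..L, deriv h₂ y = 0 := integral_deriv_periodic' hh₂ hh₂per
  have hcD₁₁ : Continuous D₁₁ := hD₁₁.continuous
  have hcD₂₂ : Continuous D₂₂ := hD₂₂.continuous
  have hcw₁' : Continuous (deriv w₁) := (deriv_contDiff' (n := 1) (by exact_mod_cast hw₁)).continuous
  have hcw₂' : Continuous (deriv w₂) := (deriv_contDiff' (n := 1) (by exact_mod_cast hw₂)).continuous
  have hi1 : IntervalIntegrable (fun y => (A₁₁ + G') * D₁₁ y) MeasureTheory.volume 0 L :=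
    (continuous_const.mul hcD₁₁).intervalIntegrable _ _
  have hi2 : IntervalIntegrable (fun y => A₂₂ * (D₂₂ y * (1 + deriv w₂ y)))
      MeasureTheory.volume 0 L :=
    (continuous_const.mul (hcD₂₂.mul (continuous_const.add hcw₂'))).intervalIntegrable _ _
  have hi3 : IntervalIntegrable (fun y => B * (D₂₂ y * deriv w₁ y)) MeasureTheory.volume 0 L :=
    (continuous_const.mul (hcD₂₂.mul hcw₁')).intervalIntegrable _ _
  have himain : IntervalIntegrable (fun y => Ut - ((A₁₁ + G') * D₁₁ y
      + A₂₂ * (D₂₂ y * (1 + deriv w₂ y)) + B * (D₂₂ y * deriv w₁ y)))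
      MeasureTheory.volume 0 L := by
    apply ((continuous_const.sub (((continuous_const.mul hcD₁₁).add
      (continuous_const.mul (hcD₂₂.mul (continuous_const.add hcw₂')))).add
      (continuous_const.mul (hcD₂₂.mul hcw₁')))).intervalIntegrable _ _)
  have hih₁ : IntervalIntegrable (deriv h₁) MeasureTheory.volume 0 L :=
    (contDiff_one_iff_deriv.mp hh₁).2.intervalIntegrable _ _
  have hih₂ : IntervalIntegrable (deriv h₂) MeasureTheory.volume 0 L :=
    (contDiff_one_iff_deriv.mp hh₂).2.intervalIntegrable _ _
  have hIF : ∫ y in (0:ℝ)..L, F X₁ X₂ y T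
      = L * Ut - ((A₁₁ + G') * ∫ y in (0:ℝ)..L, D₁₁ y)
        - (A₂₂ * ∫ y in (0:ℝ)..L, D₂₂ y * (1 + deriv w₂ y))
        - (B * ∫ y in (0:ℝ)..L, D₂₂ y * deriv w₁ y) := by
    calc ∫ y in (0:ℝ)..L, F X₁ X₂ y T
        = ∫ y in (0:ℝ)..L, ((Ut - ((A₁₁ + G') * D₁₁ y + A₂₂ * (D₂₂ y * (1 + deriv w₂ y))
            + B * (D₂₂ y * deriv w₁ y))) - deriv h₁ y - deriv h₂ y) := by
          simp only [key]
      _ = (∫ y in (0:ℝ)..L, (Ut - ((A₁₁ + G') * D₁₁ y + A₂₂ * (D₂₂ y * (1 + deriv w₂ y))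
            + B * (D₂₂ y * deriv w₁ y)))) - (∫ y in (0:ℝ)..L, deriv h₁ y)
            - (∫ y in (0:ℝ)..L, deriv h₂ y) := by
          rw [intervalIntegral.integral_sub (himain.sub hih₁) hih₂,
            intervalIntegral.integral_sub himain hih₁]
      _ = _ := by
          rw [hIh₁, hIh₂,
            intervalIntegral.integral_sub (intervalIntegrable_const) ((hi1.add hi2).add hi3),
            intervalIntegral.integral_add (hi1.add hi2) hi3,
            intervalIntegral.integral_add hi1 hi2,
            intervalIntegral.integral_const_mul, intervalIntegral.integral_const_mul,
            intervalIntegral.integral_const_mul, intervalIntegral.integral_const]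
          simp [smul_eq_mul]
          ring
  -- compute the derivatives in the goal
  have eg1 : deriv (fun s => 𝔻₁₁ * (deriv f₁ s + g (U₀ s X₂ T))) X₁ = 𝔻₁₁ * (A₁₁ + G') :=
    ((hdf₁at.add hGgat).const_mul 𝔻₁₁).deriv
  have eg2 : deriv (fun s => 𝔻₂₁ * (deriv (fun r => U₀ r s T) X₁ + g (U₀ X₁ s T))
      + 𝔻₂₂ * deriv f₂ s) X₂ = 𝔻₂₁ * B + 𝔻₂₂ * A₂₂ := by
    have : (fun s => 𝔻₂₁ * (deriv (fun r => U₀ r s T) X₁ + g (U₀ X₁ s T)) + 𝔻₂₂ * deriv f₂ s)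
        = fun s => 𝔻₂₁ * q s + 𝔻₂₂ * deriv f₂ s := by
      funext s
      rw [hqdef]
      simp only [hP₁slice]
    rw [this]
    exact ((hqat.const_mul 𝔻₂₁).add (hdf₂at.const_mul 𝔻₂₂)).deriv
  rw [show (fun s => 𝔻₁₁ * (deriv (fun r => U₀ r X₂ T) s + g (U₀ s X₂ T)))
      = fun s => 𝔻₁₁ * (deriv f₁ s + g (U₀ s X₂ T)) from rfl, eg1]
  rw [show (fun s => 𝔻₂₁ * (deriv (fun r => U₀ r s T) X₁ + g (U₀ X₁ s T))
      + 𝔻₂₂ * deriv (fun r => U₀ X₁ r T) s)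
      = fun s => 𝔻₂₁ * (deriv (fun r => U₀ r s T) X₁ + g (U₀ X₁ s T)) + 𝔻₂₂ * deriv f₂ s
      from rfl, eg2]
  rw [hIF, h𝔻₁₁, h𝔻₂₁, h𝔻₂₂]
  field_simp
  ring
end

section
/- Under the hypotheses of the integrated flux balance — namely, Dᵢⱼ : [−1,1] × ℝ → ℝ C¹ and 1-periodic in y₂, g : ℝ → ℝ C¹, u, F : [−1,1] × ℝ × ℝ → ℝ (C² and continuous, respectively) 1-periodic in y₂, satisfying the membrane equation ∂u/∂T − [∂/∂z₁(D₁₁ ∂u/∂z₁) + ∂/∂y₂(D₂₂ ∂u/∂y₂) + ∂/∂z₁(D₁₂ ∂u/∂y₂) + ∂/∂y₂(D₂₁ ∂u/∂z₁)] − ∂/∂z₁(D₁₁ g(u)) − ∂/∂y₂(D₂₁ g(u)) = F for all (z₁, y₂, T) — assume in addition that the external normal fluxes J⁻, J⁺ : ℝ × ℝ → ℝ satisfy the transmission conditions J⁻(y₂, T) = [D₁₁ ∂u/∂z₁ + D₁₂ ∂u/∂y₂ + D₁₁ g(u)](−1, y₂, T) and J⁺(y₂, T) = −[D₁₁ ∂u/∂z₁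 + D₁₂ ∂u/∂y₂ + D₁₁ g(u)](1, y₂, T). Then for every T the jump condition holds: ∫₀¹ (J⁺(y₂,T) + J⁻(y₂,T)) dy₂ = ∫₀¹∫₋₁¹ (F − ∂u/∂T) dz₁ dy₂; that is, the total normal flux entering the membrane through its two vertical interfaces equals the source integrated over the membrane cell minus the rate of accumulation inside it. -/
/-- The internal membrane flux `D₁₁ ∂u/∂z₁ + D₁₂ ∂u/∂y₂ + D₁₁ g(u)`. -/
noncomputable def membraneFlux (D₁₁ D₁₂ : ℝ → ℝ → ℝ) (g : ℝ → ℝ)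
    (u : ℝ → ℝ → ℝ → ℝ) (z₁ y₂ T : ℝ) : ℝ :=
  D₁₁ z₁ y₂ * deriv (fun r => u r y₂ T) z₁
    + D₁₂ z₁ y₂ * deriv (fun r => u z₁ r T) y₂
    + D₁₁ z₁ y₂ * g (u z₁ y₂ T)

open MeasureTheory

lemma hasDerivAt_c3_fst (f : ℝ × ℝ × ℝ → ℝ) {z y T : ℝ} (hf : DifferentiableAt ℝ f (z, y, T)) :
    HasDerivAt (fun r => f (r, y, T)) (fderiv ℝ f (z, y, T) (1, 0, 0)) z := by
  have h1 : HasDerivAt (fun r : ℝ => ((r, y, T) : ℝ × ℝ × ℝ)) ((1:ℝ), (0:ℝ), (0:ℝ)) z :=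
    HasDerivAt.prodMk (hasDerivAt_id z) (HasDerivAt.prodMk (hasDerivAt_const z y) (hasDerivAt_const z T))
  exact hf.hasFDerivAt.comp_hasDerivAt z h1

lemma hasDerivAt_c3_snd (f : ℝ × ℝ × ℝ → ℝ) {z y T : ℝ} (hf : DifferentiableAt ℝ f (z, y, T)) :
    HasDerivAt (fun r => f (z, r, T)) (fderiv ℝ f (z, y, T) (0, 1, 0)) y := by
  have h1 : HasDerivAt (fun r : ℝ => ((z, r, T) : ℝ × ℝ × ℝ)) ((0:ℝ), (1:ℝ), (0:ℝ)) y :=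
    HasDerivAt.prodMk (hasDerivAt_const y z) (HasDerivAt.prodMk (hasDerivAt_id y) (hasDerivAt_const y T))
  exact hf.hasFDerivAt.comp_hasDerivAt y h1

lemma hasDerivAt_c2_fst (f : ℝ × ℝ → ℝ) {z y : ℝ} (hf : DifferentiableAt ℝ f (z, y)) :
    HasDerivAt (fun r => f (r, y)) (fderiv ℝ f (z, y) (1, 0)) z := by
  have h1 : HasDerivAt (fun r : ℝ => ((r, y) : ℝ × ℝ)) ((1:ℝ), (0:ℝ)) z :=
    HasDerivAt.prodMk (hasDerivAt_id z) (hasDerivAt_const z y)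
  exact hf.hasFDerivAt.comp_hasDerivAt z h1

lemma hasDerivAt_c2_snd (f : ℝ × ℝ → ℝ) {z y : ℝ} (hf : DifferentiableAt ℝ f (z, y)) :
    HasDerivAt (fun r => f (z, r)) (fderiv ℝ f (z, y) (0, 1)) y := by
  have h1 : HasDerivAt (fun r : ℝ => ((z, r) : ℝ × ℝ)) ((0:ℝ), (1:ℝ)) y :=
    HasDerivAt.prodMk (hasDerivAt_const y z) (hasDerivAt_id y)
  exact hf.hasFDerivAt.comp_hasDerivAt y h1

/-- first partial derivative of u -/
noncomputable def pd1 (u : ℝ → ℝ → ℝ → ℝ) (z y T : ℝ) : ℝ :=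
  fderiv ℝ (fun p : ℝ × ℝ × ℝ => u p.1 p.2.1 p.2.2) (z, y, T) (1, 0, 0)

noncomputable def pd2 (u : ℝ → ℝ → ℝ → ℝ) (z y T : ℝ) : ℝ :=
  fderiv ℝ (fun p : ℝ × ℝ × ℝ => u p.1 p.2.1 p.2.2) (z, y, T) (0, 1, 0)

lemma pd1_eq (u : ℝ → ℝ → ℝ → ℝ) (hu : Differentiable ℝ fun p : ℝ × ℝ × ℝ => u p.1 p.2.1 p.2.2)
    (z y T : ℝ) : deriv (fun r => u r y T) z = pd1 u z y T :=
  (hasDerivAt_c3_fst _ (hu (z, y, T))).deriv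

lemma pd2_eq (u : ℝ → ℝ → ℝ → ℝ) (hu : Differentiable ℝ fun p : ℝ × ℝ × ℝ => u p.1 p.2.1 p.2.2)
    (z y T : ℝ) : deriv (fun r => u z r T) y = pd2 u z y T :=
  (hasDerivAt_c3_snd _ (hu (z, y, T))).deriv

lemma pd1_contDiff (u : ℝ → ℝ → ℝ → ℝ) (hu : ContDiff ℝ 2 fun p : ℝ × ℝ × ℝ => u p.1 p.2.1 p.2.2) :
    ContDiff ℝ 1 fun p : ℝ × ℝ × ℝ => pd1 u p.1 p.2.1 p.2.2 :=
  (hu.fderiv_right (by norm_num)).clm_apply contDiff_const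

lemma pd2_contDiff (u : ℝ → ℝ → ℝ → ℝ) (hu : ContDiff ℝ 2 fun p : ℝ × ℝ × ℝ => u p.1 p.2.1 p.2.2) :
    ContDiff ℝ 1 fun p : ℝ × ℝ × ℝ => pd2 u p.1 p.2.1 p.2.2 :=
  (hu.fderiv_right (by norm_num)).clm_apply contDiff_const

noncomputable def Afun (D₁₁ D₁₂ : ℝ → ℝ → ℝ) (g : ℝ → ℝ) (u : ℝ → ℝ → ℝ → ℝ) (T : ℝ) :
    ℝ × ℝ → ℝ := fun p =>
  D₁₁ p.1 p.2 * pd1 u p.1 p.2 T + D₁₂ p.1 p.2 * pd2 u p.1 p.2 T + D₁₁ p.1 p.2 * g (u p.1 p.2 T)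

noncomputable def Bfun (D₂₁ D₂₂ : ℝ → ℝ → ℝ) (g : ℝ → ℝ) (u : ℝ → ℝ → ℝ → ℝ) (T : ℝ) :
    ℝ × ℝ → ℝ := fun p =>
  D₂₂ p.1 p.2 * pd2 u p.1 p.2 T + D₂₁ p.1 p.2 * pd1 u p.1 p.2 T + D₂₁ p.1 p.2 * g (u p.1 p.2 T)

lemma emb_contDiff (T : ℝ) : ContDiff ℝ 1 fun p : ℝ × ℝ => ((p.1, p.2, T) : ℝ × ℝ × ℝ) :=
  contDiff_fst.prodMk (contDiff_snd.prodMk contDiff_const)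

lemma Afun_contDiff (D₁₁ D₁₂ : ℝ → ℝ → ℝ) (g : ℝ → ℝ) (u : ℝ → ℝ → ℝ → ℝ) (T : ℝ)
    (hD₁₁ : ContDiff ℝ 1 fun p : ℝ × ℝ => D₁₁ p.1 p.2)
    (hD₁₂ : ContDiff ℝ 1 fun p : ℝ × ℝ => D₁₂ p.1 p.2)
    (hg : ContDiff ℝ 1 g)
    (hu : ContDiff ℝ 2 fun p : ℝ × ℝ × ℝ => u p.1 p.2.1 p.2.2) :
    ContDiff ℝ 1 (Afun D₁₁ D₁₂ g u T) := by
  have h1 := (pd1_contDiff u hu).comp (emb_contDiff T)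
  have h2 := (pd2_contDiff u hu).comp (emb_contDiff T)
  have h3 : ContDiff ℝ 1 fun p : ℝ × ℝ => u p.1 p.2 T :=
    (hu.of_le (by norm_num)).comp (emb_contDiff T)
  exact ((hD₁₁.mul h1).add (hD₁₂.mul h2)).add (hD₁₁.mul (hg.comp h3))

lemma Bfun_contDiff (D₂₁ D₂₂ : ℝ → ℝ → ℝ) (g : ℝ → ℝ) (u : ℝ → ℝ → ℝ → ℝ) (T : ℝ)
    (hD₂₁ : ContDiff ℝ 1 fun p : ℝ × ℝ => D₂₁ p.1 p.2)
    (hD₂₂ : ContDiff ℝ 1 fun p : ℝ × ℝ => D₂₂ p.1 p.2)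
    (hg : ContDiff ℝ 1 g)
    (hu : ContDiff ℝ 2 fun p : ℝ × ℝ × ℝ => u p.1 p.2.1 p.2.2) :
    ContDiff ℝ 1 (Bfun D₂₁ D₂₂ g u T) := by
  have h1 := (pd1_contDiff u hu).comp (emb_contDiff T)
  have h2 := (pd2_contDiff u hu).comp (emb_contDiff T)
  have h3 : ContDiff ℝ 1 fun p : ℝ × ℝ => u p.1 p.2 T :=
    (hu.of_le (by norm_num)).comp (emb_contDiff T)
  exact ((hD₂₂.mul h2).add (hD₂₁.mul h1)).add (hD₂₁.mul (hg.comp h3))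

lemma Afun_deriv_split (D₁₁ D₁₂ : ℝ → ℝ → ℝ) (g : ℝ → ℝ) (u : ℝ → ℝ → ℝ → ℝ) (T z y : ℝ)
    (hD₁₁ : ContDiff ℝ 1 fun p : ℝ × ℝ => D₁₁ p.1 p.2)
    (hD₁₂ : ContDiff ℝ 1 fun p : ℝ × ℝ => D₁₂ p.1 p.2)
    (hg : ContDiff ℝ 1 g)
    (hu : ContDiff ℝ 2 fun p : ℝ × ℝ × ℝ => u p.1 p.2.1 p.2.2) :
    deriv (fun s => Afun D₁₁ D₁₂ g u T (s, y)) z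
      = deriv (fun s => D₁₁ s y * deriv (fun r => u r y T) s) z
        + deriv (fun s => D₁₂ s y * deriv (fun r => u s r T) y) z
        + deriv (fun s => D₁₁ s y * g (u s y T)) z := by
  have hud : Differentiable ℝ fun p : ℝ × ℝ × ℝ => u p.1 p.2.1 p.2.2 :=
    (hu.of_le (m := 1) (by norm_num)).differentiable one_ne_zero
  have e1 : (fun s => D₁₁ s y * deriv (fun r => u r y T) s)
      = fun s => D₁₁ s y * pd1 u s y T := funext fun s => by rw [pd1_eq u hud]
  have e2 : (fun s => D₁₂ s y * deriv (fun r => u s r T) y)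
      = fun s => D₁₂ s y * pd2 u s y T := funext fun s => by rw [pd2_eq u hud]
  rw [e1, e2]
  have hline2 : Differentiable ℝ fun s : ℝ => ((s, y) : ℝ × ℝ) :=
    differentiable_id.prodMk (differentiable_const y)
  have hline3 : Differentiable ℝ fun s : ℝ => ((s, y, T) : ℝ × ℝ × ℝ) :=
    differentiable_id.prodMk (differentiable_const (y, T))
  have hD11s : Differentiable ℝ fun s => D₁₁ s y :=
    (hD₁₁.differentiable one_ne_zero).comp hline2
  have hD12s : Differentiable ℝ fun s => D₁₂ s y :=
    (hD₁₂.differentiable one_ne_zero).comp hline2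
  have hd1 : Differentiable ℝ fun s => D₁₁ s y * pd1 u s y T :=
    hD11s.mul (((pd1_contDiff u hu).differentiable one_ne_zero).comp hline3)
  have hd2 : Differentiable ℝ fun s => D₁₂ s y * pd2 u s y T :=
    hD12s.mul (((pd2_contDiff u hu).differentiable one_ne_zero).comp hline3)
  have hd3 : Differentiable ℝ fun s => D₁₁ s y * g (u s y T) :=
    hD11s.mul ((hg.differentiable one_ne_zero).comp (hud.comp hline3))
  exact ((((hd1 z).hasDerivAt.add (hd2 z).hasDerivAt).add (hd3 z).hasDerivAt)).deriv

lemma Bfun_deriv_split (D₂₁ D₂₂ : ℝ → ℝ → ℝ) (g : ℝ → ℝ) (u : ℝ → ℝ → ℝ → ℝ) (T z y : ℝ)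
    (hD₂₁ : ContDiff ℝ 1 fun p : ℝ × ℝ => D₂₁ p.1 p.2)
    (hD₂₂ : ContDiff ℝ 1 fun p : ℝ × ℝ => D₂₂ p.1 p.2)
    (hg : ContDiff ℝ 1 g)
    (hu : ContDiff ℝ 2 fun p : ℝ × ℝ × ℝ => u p.1 p.2.1 p.2.2) :
    deriv (fun s => Bfun D₂₁ D₂₂ g u T (z, s)) y
      = deriv (fun s => D₂₂ z s * deriv (fun r => u z r T) s) y
        + deriv (fun s => D₂₁ z s * deriv (fun r => u r s T) z) y
        + deriv (fun s => D₂₁ z s * g (u z s T)) y := by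
  have hud : Differentiable ℝ fun p : ℝ × ℝ × ℝ => u p.1 p.2.1 p.2.2 :=
    (hu.of_le (m := 1) (by norm_num)).differentiable one_ne_zero
  have e1 : (fun s => D₂₂ z s * deriv (fun r => u z r T) s)
      = fun s => D₂₂ z s * pd2 u z s T := funext fun s => by rw [pd2_eq u hud]
  have e2 : (fun s => D₂₁ z s * deriv (fun r => u r s T) z)
      = fun s => D₂₁ z s * pd1 u z s T := funext fun s => by rw [pd1_eq u hud]
  rw [e1, e2]
  have hline2 : Differentiable ℝ fun s : ℝ => ((z, s) : ℝ × ℝ) :=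
    (differentiable_const z).prodMk differentiable_id
  have hline3 : Differentiable ℝ fun s : ℝ => ((z, s, T) : ℝ × ℝ × ℝ) :=
    (differentiable_const z).prodMk (differentiable_id.prodMk (differentiable_const T))
  have hD21s : Differentiable ℝ fun s => D₂₁ z s :=
    (hD₂₁.differentiable one_ne_zero).comp hline2
  have hD22s : Differentiable ℝ fun s => D₂₂ z s :=
    (hD₂₂.differentiable one_ne_zero).comp hline2
  have hd1 : Differentiable ℝ fun s => D₂₂ z s * pd2 u z s T :=
    hD22s.mul (((pd2_contDiff u hu).differentiable one_ne_zero).comp hline3)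
  have hd2 : Differentiable ℝ fun s => D₂₁ z s * pd1 u z s T :=
    hD21s.mul (((pd1_contDiff u hu).differentiable one_ne_zero).comp hline3)
  have hd3 : Differentiable ℝ fun s => D₂₁ z s * g (u z s T) :=
    hD21s.mul ((hg.differentiable one_ne_zero).comp (hud.comp hline3))
  exact ((((hd1 y).hasDerivAt.add (hd2 y).hasDerivAt).add (hd3 y).hasDerivAt)).deriv

lemma periodic_deriv_one {f : ℝ → ℝ} (h : Function.Periodic f 1) : deriv f 1 = deriv f 0 := by
  have hfe : (fun x => f (x + 1)) = f := funext h
  have h2 : deriv (fun x => f (x + 1)) 0 = deriv f (0 + 1) := deriv_comp_add_const f 1 0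
  rw [hfe, zero_add] at h2
  exact h2.symm

/-- Jump condition across the infinitely-thin membrane. Under the
hypotheses of the integrated flux balance, if the external normal fluxes satisfy the
transmission conditions `J⁻(y₂,T) = flux(−1,y₂,T)` and `J⁺(y₂,T) = −flux(1,y₂,T)`,
then `∫₀¹ (J⁺ + J⁻) dy₂ = ∫₀¹∫₋₁¹ (F − ∂u/∂T) dz₁ dy₂`: the total normal flux
entering through the two vertical interfaces equals the integrated source minus the
rate of accumulation inside the membrane cell. -/
theorem membrane_jump_condition
    (D₁₁ D₁₂ D₂₁ D₂₂ : ℝ → ℝ → ℝ)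
    (hD₁₁ : ContDiff ℝ 1 fun p : ℝ × ℝ => D₁₁ p.1 p.2)
    (hD₁₂ : ContDiff ℝ 1 fun p : ℝ × ℝ => D₁₂ p.1 p.2)
    (hD₂₁ : ContDiff ℝ 1 fun p : ℝ × ℝ => D₂₁ p.1 p.2)
    (hD₂₂ : ContDiff ℝ 1 fun p : ℝ × ℝ => D₂₂ p.1 p.2)
    (hD₁₁_per : ∀ z₁ : ℝ, Function.Periodic (fun y => D₁₁ z₁ y) 1)
    (hD₁₂_per : ∀ z₁ : ℝ, Function.Periodic (fun y => D₁₂ z₁ y) 1)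
    (hD₂₁_per : ∀ z₁ : ℝ, Function.Periodic (fun y => D₂₁ z₁ y) 1)
    (hD₂₂_per : ∀ z₁ : ℝ, Function.Periodic (fun y => D₂₂ z₁ y) 1)
    (g : ℝ → ℝ) (hg : ContDiff ℝ 1 g)
    (u : ℝ → ℝ → ℝ → ℝ)
    (hu : ContDiff ℝ 2 fun p : ℝ × ℝ × ℝ => u p.1 p.2.1 p.2.2)
    (hu_per : ∀ z₁ T : ℝ, Function.Periodic (fun y => u z₁ y T) 1)
    (F : ℝ → ℝ → ℝ → ℝ)
    (hF : Continuous fun p : ℝ × ℝ × ℝ => F p.1 p.2.1 p.2.2)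
    (hF_per : ∀ z₁ T : ℝ, Function.Periodic (fun y => F z₁ y T) 1)
    -- the membrane equation on [−1,1] × ℝ × ℝ
    (hpde : ∀ z₁ ∈ Set.Icc (-1:ℝ) 1, ∀ y₂ T : ℝ,
      deriv (fun s => u z₁ y₂ s) T
        - (deriv (fun s => D₁₁ s y₂ * deriv (fun r => u r y₂ T) s) z₁
            + deriv (fun s => D₂₂ z₁ s * deriv (fun r => u z₁ r T) s) y₂
            + deriv (fun s => D₁₂ s y₂ * deriv (fun r => u s r T) y₂) z₁
            + deriv (fun s => D₂₁ z₁ s * deriv (fun r => u r s T) z₁) y₂)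
        - deriv (fun s => D₁₁ s y₂ * g (u s y₂ T)) z₁
        - deriv (fun s => D₂₁ z₁ s * g (u z₁ s T)) y₂
      = F z₁ y₂ T)
    -- the transmission conditions for the external normal fluxes
    (Jminus Jplus : ℝ → ℝ → ℝ)
    (hJminus : ∀ y₂ T : ℝ, Jminus y₂ T = membraneFlux D₁₁ D₁₂ g u (-1) y₂ T)
    (hJplus : ∀ y₂ T : ℝ, Jplus y₂ T = - membraneFlux D₁₁ D₁₂ g u 1 y₂ T) :
    ∀ T : ℝ,
      (∫ y in (0:ℝ)..1, (Jplus y T + Jminus y T))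
      = ∫ y in (0:ℝ)..1, ∫ z in (-1:ℝ)..1,
          (F z y T - deriv (fun s => u z y s) T) := by
  intro T
  have hud : Differentiable ℝ fun p : ℝ × ℝ × ℝ => u p.1 p.2.1 p.2.2 :=
    (hu.of_le (m := 1) (by norm_num)).differentiable one_ne_zero
  set A : ℝ × ℝ → ℝ := Afun D₁₁ D₁₂ g u T with hAdef
  set B : ℝ × ℝ → ℝ := Bfun D₂₁ D₂₂ g u T with hBdef
  have hAc : ContDiff ℝ 1 A := Afun_contDiff D₁₁ D₁₂ g u T hD₁₁ hD₁₂ hg hu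
  have hBc : ContDiff ℝ 1 B := Bfun_contDiff D₂₁ D₂₂ g u T hD₂₁ hD₂₂ hg hu
  set PA : ℝ × ℝ → ℝ := fun p => fderiv ℝ A p (1, 0) with hPAdef
  set QB : ℝ × ℝ → ℝ := fun p => fderiv ℝ B p (0, 1) with hQBdef
  have hPAcont : Continuous PA := (hAc.continuous_fderiv one_ne_zero).clm_apply continuous_const
  have hQBcont : Continuous QB := (hBc.continuous_fderiv one_ne_zero).clm_apply continuous_const
  have hAd : ∀ z y : ℝ, HasDerivAt (fun s => A (s, y)) (PA (z, y)) z := fun z y =>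
    hasDerivAt_c2_fst A ((hAc.differentiable one_ne_zero) (z, y))
  have hBd : ∀ z y : ℝ, HasDerivAt (fun s => B (z, s)) (QB (z, y)) y := fun z y =>
    hasDerivAt_c2_snd B ((hBc.differentiable one_ne_zero) (z, y))
  -- membraneFlux = A
  have hAeq : ∀ z y : ℝ, membraneFlux D₁₁ D₁₂ g u z y T = A (z, y) := by
    intro z y
    simp only [membraneFlux, hAdef, Afun, pd1_eq u hud, pd2_eq u hud]
  -- pointwise identity
  have hid : ∀ z ∈ Set.Icc (-1:ℝ) 1, ∀ y : ℝ,
      F z y T - deriv (fun s => u z y s) T = -PA (z, y) - QB (z, y) := by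
    intro z hz y
    have hp := hpde z hz y T
    have hA := Afun_deriv_split D₁₁ D₁₂ g u T z y hD₁₁ hD₁₂ hg hu
    have hB := Bfun_deriv_split D₂₁ D₂₂ g u T z y hD₂₁ hD₂₂ hg hu
    have hPAv : PA (z, y) = deriv (fun s => A (s, y)) z := ((hAd z y).deriv).symm
    have hQBv : QB (z, y) = deriv (fun s => B (z, s)) y := ((hBd z y).deriv).symm
    rw [hPAv, hQBv, hAdef, hBdef, hA, hB]
    linarith
  -- FTC in z
  have hFTCz : ∀ y : ℝ, (∫ z in (-1:ℝ)..1, PA (z, y)) = A (1, y) - A (-1, y) := by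
    intro y
    exact intervalIntegral.integral_eq_sub_of_hasDerivAt (fun z _ => hAd z y)
      ((hPAcont.comp (continuous_id.prodMk continuous_const)).intervalIntegrable _ _)
  -- FTC in y and periodicity
  have hFTCy : ∀ z : ℝ, (∫ y in (0:ℝ)..1, QB (z, y)) = 0 := by
    intro z
    have h1 : (∫ y in (0:ℝ)..1, QB (z, y)) = B (z, 1) - B (z, 0) :=
      intervalIntegral.integral_eq_sub_of_hasDerivAt (fun y _ => hBd z y)
        ((hQBcont.comp (continuous_const.prodMk continuous_id)).intervalIntegrable _ _)
    have hu1 : (fun r => u r 1 T) = fun r => u r 0 T := by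
      funext r
      have := hu_per r T 0
      simpa using this
    have hB10 : B (z, 1) = B (z, 0) := by
      have e1 : pd1 u z 1 T = pd1 u z 0 T := by
        rw [← pd1_eq u hud, ← pd1_eq u hud, hu1]
      have e2 : pd2 u z 1 T = pd2 u z 0 T := by
        rw [← pd2_eq u hud, ← pd2_eq u hud]
        exact periodic_deriv_one (hu_per z T)
      have e3 : u z 1 T = u z 0 T := by simpa using hu_per z T 0
      have e4 : D₂₁ z 1 = D₂₁ z 0 := by simpa using hD₂₁_per z 0
      have e5 : D₂₂ z 1 = D₂₂ z 0 := by simpa using hD₂₂_per z 0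
      simp only [hBdef, Bfun, e1, e2, e3, e4, e5]
    rw [h1, hB10, sub_self]
  -- inner integral identity
  have hinner : ∀ y : ℝ, (∫ z in (-1:ℝ)..1, (F z y T - deriv (fun s => u z y s) T))
      = (Jplus y T + Jminus y T) - ∫ z in (-1:ℝ)..1, QB (z, y) := by
    intro y
    have h1 : (∫ z in (-1:ℝ)..1, (F z y T - deriv (fun s => u z y s) T))
        = ∫ z in (-1:ℝ)..1, (-PA (z, y) - QB (z, y)) := by
      apply intervalIntegral.integral_congr
      intro z hz
      have hz' : z ∈ Set.Icc (-1:ℝ) 1 := by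
        rwa [Set.uIcc_of_le (by norm_num : (-1:ℝ) ≤ 1)] at hz
      exact hid z hz' y
    have hPAi : IntervalIntegrable (fun z => PA (z, y)) MeasureTheory.volume (-1) 1 :=
      (hPAcont.comp (continuous_id.prodMk continuous_const)).intervalIntegrable _ _
    have hQBi : IntervalIntegrable (fun z => QB (z, y)) MeasureTheory.volume (-1) 1 :=
      (hQBcont.comp (continuous_id.prodMk continuous_const)).intervalIntegrable _ _
    have hPAi' : IntervalIntegrable (fun z => -PA (z, y)) MeasureTheory.volume (-1) 1 :=
      ((hPAcont.comp (continuous_id.prodMk continuous_const)).neg).intervalIntegrable _ _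
    rw [h1, intervalIntegral.integral_sub hPAi' hQBi, intervalIntegral.integral_neg,
      hFTCz y, hJplus, hJminus, hAeq, hAeq]
    ring
  -- Fubini for the QB term
  have hQBzero : (∫ y in (0:ℝ)..1, (∫ z in (-1:ℝ)..1, QB (z, y))) = 0 := by
    have hswap : (∫ y in Set.Ioc (0:ℝ) 1, (∫ z in Set.Ioc (-1:ℝ) 1, QB (z, y))) 
        = ∫ z in Set.Ioc (-1:ℝ) 1, (∫ y in Set.Ioc (0:ℝ) 1, QB (z, y)) := by
      have hint : MeasureTheory.Integrable (Function.uncurry fun y z => QB (z, y))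
          ((MeasureTheory.volume.restrict (Set.Ioc (0:ℝ) 1)).prod
            (MeasureTheory.volume.restrict (Set.Ioc (-1:ℝ) 1))) := by
        rw [MeasureTheory.Measure.prod_restrict]
        have hc : Continuous (Function.uncurry fun y z => QB (z, y)) :=
          hQBcont.comp continuous_swap
        exact (hc.continuousOn.integrableOn_compact
          (isCompact_Icc.prod isCompact_Icc)).mono_set
          (Set.prod_mono Set.Ioc_subset_Icc_self Set.Ioc_subset_Icc_self)
      exact MeasureTheory.integral_integral_swap hint
    rw [intervalIntegral.integral_of_le (by norm_num : (0:ℝ) ≤ 1)]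
    have hconv : ∀ y : ℝ, (∫ z in (-1:ℝ)..1, QB (z, y)) = ∫ z in Set.Ioc (-1:ℝ) 1, QB (z, y) :=
      fun y => intervalIntegral.integral_of_le (by norm_num)
    simp only [hconv]
    rw [hswap]
    have hz0 : ∀ z : ℝ, (∫ y in Set.Ioc (0:ℝ) 1, QB (z, y)) = 0 := by
      intro z
      rw [← intervalIntegral.integral_of_le (by norm_num : (0:ℝ) ≤ 1)]
      exact hFTCy z
    simp only [hz0, MeasureTheory.integral_zero]
  -- assemble
  have hJcont : Continuous fun y => Jplus y T + Jminus y T := by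
    have : (fun y => Jplus y T + Jminus y T) = fun y => -A (1, y) + A (-1, y) := by
      funext y
      rw [hJplus, hJminus, hAeq, hAeq]
    rw [this]
    exact ((hAc.continuous.comp (continuous_const.prodMk continuous_id)).neg).add
      (hAc.continuous.comp (continuous_const.prodMk continuous_id))
  have hQcont : Continuous fun y => ∫ z in (-1:ℝ)..1, QB (z, y) := by
    apply intervalIntegral.continuous_parametric_intervalIntegral_of_continuous'
    exact hQBcont.comp continuous_swap
  calc (∫ y in (0:ℝ)..1, (Jplus y T + Jminus y T))
      = ∫ y in (0:ℝ)..1, ((Jplus y T + Jminus y T) - ∫ z in (-1:ℝ)..1, QB (z, y)) := by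
        rw [intervalIntegral.integral_sub (hJcont.intervalIntegrable _ _)
          (hQcont.intervalIntegrable _ _)]
        rw [hQBzero, sub_zero]
    _ = ∫ y in (0:ℝ)..1, ∫ z in (-1:ℝ)..1, (F z y T - deriv (fun s => u z y s) T) := by
        apply intervalIntegral.integral_congr
        intro y _
        exact (hinner y).symm
end
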